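/- (Petersen's Lemma.) Let Z ∈ ℝ^{n×n} be a symmetric matrix, and let X ∈ ℝ^{n×p} and Y ∈ ℝ^{q×n}. Then Z + X Δ Y + Yᵀ Δᵀ Xᵀ is negative definite for every matrix Δ ∈ ℝ^{p×q} satisfying Δᵀ Δ ⪯ I_q, if and only if there exists a real scalar ε > 0 such that Z + ε X Xᵀ + (1/ε) Yᵀ Y is negative definite. -/

import Mathlib

open Matrix


variable {n : ℕ}

lemma quad_smul (M : Matrix (Fin n) (Fin n) ℝ) (c : ℝ) (v : Fin n → ℝ) :
    (c • v) ⬝ᵥ M *ᵥ (c • v) = c ^ 2 * (v ⬝ᵥ M *ᵥ v) := by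
  rw [mulVec_smul, dotProduct_smul, smul_dotProduct, smul_eq_mul, smul_eq_mul]
  ring

lemma dp_nonneg (v : Fin n → ℝ) : 0 ≤ v ⬝ᵥ v :=
  Finset.sum_nonneg fun i _ => mul_self_nonneg (v i)

lemma dp_pos {v : Fin n → ℝ} (hv : v ≠ 0) : 0 < v ⬝ᵥ v := by
  rcases lt_or_eq_of_le (dp_nonneg v) with h | h
  · exact h
  · exact absurd (dotProduct_self_eq_zero.mp h.symm) hv

lemma sphere_compact : IsCompact {v : Fin n → ℝ | v ⬝ᵥ v = 1} := by
  have hclosed : IsClosed {v : Fin n → ℝ | v ⬝ᵥ v = 1} := by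
    have : Continuous fun v : Fin n → ℝ => v ⬝ᵥ v := by
      simp only [dotProduct]; fun_prop
    exact isClosed_eq this continuous_const
  have hsub : {v : Fin n → ℝ | v ⬝ᵥ v = 1} ⊆ Metric.closedBall 0 1 := by
    intro v hv
    simp only [Metric.mem_closedBall, dist_zero_right]
    rw [pi_norm_le_iff_of_nonneg (by norm_num)]
    intro i
    rw [Real.norm_eq_abs, abs_le]
    simp only [Set.mem_setOf_eq, dotProduct] at hv
    have h2 : v i * v i ≤ 1 := hv ▸ Finset.single_le_sum (f := fun j => v j * v j)
        (fun j _ => mul_self_nonneg (v j)) (Finset.mem_univ i)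
    constructor <;> nlinarith
  exact (isCompact_closedBall (0 : Fin n → ℝ) 1).of_isClosed_subset hclosed hsub

lemma quad_cont (M : Matrix (Fin n) (Fin n) ℝ) :
    Continuous fun v : Fin n → ℝ => v ⬝ᵥ M *ᵥ v := by
  simp only [dotProduct, mulVec]; fun_prop




lemma exists_unit {v : Fin n → ℝ} (hv : v ≠ 0) :
    ∃ (c : ℝ) (u : Fin n → ℝ), 0 < c ∧ u ⬝ᵥ u = 1 ∧ v = c • u := by
  have hpos := dp_pos hv
  set c := Real.sqrt (v ⬝ᵥ v) with hc
  have hcpos : 0 < c := Real.sqrt_pos.mpr hpos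
  have hc2 : c ^ 2 = v ⬝ᵥ v := Real.sq_sqrt hpos.le
  refine ⟨c, c⁻¹ • v, hcpos, ?_, (smul_inv_smul₀ hcpos.ne' v).symm⟩
  rw [smul_dotProduct, dotProduct_smul, smul_eq_mul, smul_eq_mul, ← hc2, pow_two]
  field_simp

lemma eig (M : Matrix (Fin n) (Fin n) ℝ) (hM : M.IsHermitian) {v₀ : Fin n → ℝ}
    (hv₀ : v₀ ⬝ᵥ v₀ = 1) {lam : ℝ}
    (hmax : ∀ v, v ⬝ᵥ M *ᵥ v ≤ lam * (v ⬝ᵥ v)) (heq : v₀ ⬝ᵥ M *ᵥ v₀ = lam) :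
    M *ᵥ v₀ = lam • v₀ := by
  set N := lam • (1 : Matrix (Fin n) (Fin n) ℝ) - M with hNdef
  have hquad : ∀ x : Fin n → ℝ, x ⬝ᵥ N *ᵥ x = lam * (x ⬝ᵥ x) - x ⬝ᵥ M *ᵥ x := by
    intro x
    rw [hNdef, sub_mulVec, dotProduct_sub, smul_mulVec, one_mulVec,
      dotProduct_smul, smul_eq_mul]
  have hN : N.PosSemidef := by
    refine Matrix.PosSemidef.of_dotProduct_mulVec_nonneg ?_ ?_
    · rw [hNdef]
      simp only [Matrix.IsHermitian, conjTranspose_sub, conjTranspose_smul, conjTranspose_one,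
        hM.eq, star_trivial]
    · intro x
      rw [star_trivial, hquad]
      linarith [hmax x]
  have h0 : v₀ ⬝ᵥ N *ᵥ v₀ = 0 := by rw [hquad, hv₀, heq]; ring
  have hker : N *ᵥ v₀ = 0 := (hN.dotProduct_mulVec_zero_iff v₀).mp (by rw [star_trivial]; exact h0)
  rw [hNdef, sub_mulVec, smul_mulVec, one_mulVec, sub_eq_zero] at hker
  exact hker.symm

lemma ivt_eigensphere (M G : Matrix (Fin n) (Fin n) ℝ) {lam : ℝ} {v₁ v₂ : Fin n → ℝ}
    (h1 : v₁ ⬝ᵥ v₁ = 1) (h2 : v₂ ⬝ᵥ v₂ = 1)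
    (e1 : M *ᵥ v₁ = lam • v₁) (e2 : M *ᵥ v₂ = lam • v₂)
    (g1 : 0 ≤ v₁ ⬝ᵥ G *ᵥ v₁) (g2 : v₂ ⬝ᵥ G *ᵥ v₂ ≤ 0) :
    ∃ w : Fin n → ℝ, w ⬝ᵥ w = 1 ∧ M *ᵥ w = lam • w ∧ w ⬝ᵥ G *ᵥ w = 0 := by
  by_cases hdep : ∃ t : ℝ, v₂ = t • v₁
  · obtain ⟨t, rfl⟩ := hdep
    have ht2 : t ^ 2 = 1 := by
      rw [smul_dotProduct, dotProduct_smul, smul_eq_mul, smul_eq_mul, h1] at h2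
      nlinarith
    have : (t • v₁) ⬝ᵥ G *ᵥ (t • v₁) = v₁ ⬝ᵥ G *ᵥ v₁ := by rw [quad_smul, ht2, one_mul]
    rw [this] at g2
    exact ⟨v₁, h1, e1, le_antisymm g2 g1⟩
  · set u : ℝ → (Fin n → ℝ) := fun t => (1 - t) • v₁ + t • v₂ with hu
    have hne : ∀ t : ℝ, u t ≠ 0 := by
      intro t h0
      rcases eq_or_ne t 0 with rfl | ht
      · simp only [hu, sub_zero, one_smul, zero_smul, add_zero] at h0
        rw [h0] at h1; simp [zero_dotProduct] at h1
      · apply hdep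
        refine ⟨-(1 - t) / t, ?_⟩
        have : t • v₂ = -((1 - t) • v₁) := by
          rw [eq_neg_iff_add_eq_zero, add_comm]; exact h0
        have := congrArg (fun w => t⁻¹ • w) this
        simp only [smul_smul, inv_mul_cancel₀ ht, one_smul, smul_neg] at this
        rw [this, ← neg_smul]
        congr 1
        field_simp
    have hcont : Continuous fun t : ℝ => (u t) ⬝ᵥ G *ᵥ (u t) := by
      have hucont : Continuous u := by
        rw [hu]; fun_prop
      exact ((quad_cont G).comp hucont : _)
    have hivt : (0 : ℝ) ∈ Set.Icc ((u 1) ⬝ᵥ G *ᵥ (u 1)) ((u 0) ⬝ᵥ G *ᵥ (u 0)) := by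
      constructor
      · simpa [hu] using g2
      · simpa [hu] using g1
    obtain ⟨t₀, _, ht₀⟩ := intermediate_value_Icc' (by norm_num : (0:ℝ) ≤ 1)
      (hcont.continuousOn) hivt
    obtain ⟨c, w, hcpos, hwunit, hcw⟩ := exists_unit (hne t₀)
    have heigu : M *ᵥ (u t₀) = lam • (u t₀) := by
      simp only [hu, mulVec_add, mulVec_smul, e1, e2, smul_add, smul_smul, mul_comm]
    refine ⟨w, hwunit, ?_, ?_⟩
    · rw [hcw, mulVec_smul, smul_comm] at heigu
      exact smul_right_injective (Fin n → ℝ) hcpos.ne' heigu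
    · have : (c • w) ⬝ᵥ G *ᵥ (c • w) = 0 := by rw [← hcw]; exact ht₀
      rw [quad_smul] at this
      have hc2 : c ^ 2 ≠ 0 := pow_ne_zero 2 hcpos.ne'
      exact (mul_eq_zero.mp this).resolve_left hc2



lemma gap {S : Set (Fin n → ℝ)} (hS : IsCompact S) (hne : S.Nonempty)
    {F G : (Fin n → ℝ) → ℝ} (hF : Continuous F) (hG : Continuous G) {lam : ℝ}
    (hle : ∀ v ∈ S, F v ≤ lam) (h : ∀ v ∈ S, F v = lam → G v < 0) :
    ∃ δ : ℝ, 0 < δ ∧ ∀ v ∈ S, lam - δ ≤ F v → G v ≤ -δ := by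
  set H : (Fin n → ℝ) → ℝ := fun v => max (lam - F v) (-G v) with hH
  have hHcont : Continuous H := ((continuous_const.sub hF).max hG.neg)
  obtain ⟨w, hwS, hw⟩ := hS.exists_isMinOn hne hHcont.continuousOn
  set c := H w with hc
  have hcpos : 0 < c := by
    rcases eq_or_lt_of_le (hle w hwS) with heq | hlt
    · have := h w hwS heq
      calc 0 < -G w := by linarith
        _ ≤ c := le_max_right _ _
    · calc 0 < lam - F w := by linarith
        _ ≤ c := le_max_left _ _
  refine ⟨c / 2, by linarith, fun v hvS hvF => ?_⟩
  have hcv : c ≤ H v := hw hvS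
  have h1 : lam - F v < c := by linarith
  have h2 : c ≤ -G v := by
    rcases max_cases (lam - F v) (-G v) with ⟨hmax, _⟩ | ⟨hmax, _⟩
    · exfalso; rw [hH] at hcv; simp only at hcv; rw [hmax] at hcv; linarith
    · rw [hH] at hcv; simp only at hcv; rw [hmax] at hcv; exact hcv
  linarith

lemma cs {m : ℕ} (a b : Fin m → ℝ) :
    a ⬝ᵥ b ≤ Real.sqrt (a ⬝ᵥ a) * Real.sqrt (b ⬝ᵥ b) := by
  have h := Finset.sum_mul_sq_le_sq_mul_sq Finset.univ a b
  have key : (a ⬝ᵥ b) ^ 2 ≤ (a ⬝ᵥ a) * (b ⬝ᵥ b) := by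
    simpa [dotProduct, pow_two, Finset.sum_mul_sum] using
      (by simpa [pow_two] using h : (∑ i, a i * b i) ^ 2 ≤ (∑ i, a i * a i) * ∑ i, b i * b i)
  calc a ⬝ᵥ b ≤ |a ⬝ᵥ b| := le_abs_self _
    _ = Real.sqrt ((a ⬝ᵥ b) ^ 2) := (Real.sqrt_sq_eq_abs _).symm
    _ ≤ Real.sqrt ((a ⬝ᵥ a) * (b ⬝ᵥ b)) := Real.sqrt_le_sqrt key
    _ = _ := Real.sqrt_mul (Finset.sum_nonneg fun i _ => mul_self_nonneg (a i)) _

lemma amgm {s t ε : ℝ} (hs : 0 ≤ s) (ht : 0 ≤ t) (hε : 0 < ε) :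
    2 * Real.sqrt (s * t) ≤ ε * s + ε⁻¹ * t := by
  have h1 : 0 ≤ ε * s := mul_nonneg hε.le hs
  have h2 : 0 ≤ ε⁻¹ * t := mul_nonneg (inv_pos.mpr hε).le ht
  have h3 := two_mul_le_add_sq (Real.sqrt (ε * s)) (Real.sqrt (ε⁻¹ * t))
  rw [Real.sq_sqrt h1, Real.sq_sqrt h2, mul_assoc, ← Real.sqrt_mul h1] at h3
  have h4 : ε * s * (ε⁻¹ * t) = s * t := by field_simp
  rw [h4] at h3
  linarith
lemma quad_bound_of_sphere (M : Matrix (Fin n) (Fin n) ℝ) {c : ℝ}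
    (h : ∀ v : Fin n → ℝ, v ⬝ᵥ v = 1 → v ⬝ᵥ M *ᵥ v ≤ c) (v : Fin n → ℝ) :
    v ⬝ᵥ M *ᵥ v ≤ c * (v ⬝ᵥ v) := by
  rcases eq_or_ne v 0 with rfl | hv
  · simp
  · obtain ⟨k, u, hk, hu, rfl⟩ := exists_unit hv
    rw [quad_smul, smul_dotProduct, dotProduct_smul, smul_eq_mul, smul_eq_mul, hu]
    have := h u hu
    nlinarith [sq_nonneg k]

set_option maxHeartbeats 2000000 in
lemma key (Z A B : Matrix (Fin n) (Fin n) ℝ) (hZ : Z.IsHermitian)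
    (hA : A.PosSemidef) (hB : B.PosSemidef)
    (h : ∀ v : Fin n → ℝ, v ⬝ᵥ v = 1 →
      v ⬝ᵥ Z *ᵥ v + 2 * Real.sqrt ((v ⬝ᵥ A *ᵥ v) * (v ⬝ᵥ B *ᵥ v)) < 0) :
    ∃ ε : ℝ, 0 < ε ∧ ∀ v : Fin n → ℝ, v ⬝ᵥ v = 1 →
      v ⬝ᵥ Z *ᵥ v + ε * (v ⬝ᵥ A *ᵥ v) + ε⁻¹ * (v ⬝ᵥ B *ᵥ v) < 0 := by
  classical
  by_cases hSne : ∃ v : Fin n → ℝ, v ⬝ᵥ v = 1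
  swap
  · exact ⟨1, one_pos, fun v hv => absurd ⟨v, hv⟩ hSne⟩
  set S : Set (Fin n → ℝ) := {v | v ⬝ᵥ v = 1} with hSdef
  have hSne' : S.Nonempty := hSne
  have hScpt : IsCompact S := sphere_compact
  set za : (Fin n → ℝ) → ℝ := fun v => v ⬝ᵥ Z *ᵥ v with hza
  set fa : (Fin n → ℝ) → ℝ := fun v => v ⬝ᵥ A *ᵥ v with hfa
  set fb : (Fin n → ℝ) → ℝ := fun v => v ⬝ᵥ B *ᵥ v with hfb
  have hfa0 : ∀ v, 0 ≤ fa v := fun v => by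
    have := hA.dotProduct_mulVec_nonneg v; rwa [star_trivial] at this
  have hfb0 : ∀ v, 0 ≤ fb v := fun v => by
    have := hB.dotProduct_mulVec_nonneg v; rwa [star_trivial] at this
  have hzacont : Continuous za := quad_cont Z
  have hfacont : Continuous fa := quad_cont A
  have hfbcont : Continuous fb := quad_cont B
  -- max of fa, fb / min of za on the sphere
  obtain ⟨wa, hwaS, hwa⟩ := hScpt.exists_isMaxOn hSne' hfacont.continuousOn
  obtain ⟨wb, hwbS, hwb⟩ := hScpt.exists_isMaxOn hSne' hfbcont.continuousOn
  obtain ⟨wz, hwzS, hwz⟩ := hScpt.exists_isMinOn hSne' hzacont.continuousOn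
  set Ma := fa wa with hMa
  set Mb := fb wb with hMb
  set mz := za wz with hmz
  have hMa0 : 0 ≤ Ma := hfa0 wa
  have hMb0 : 0 ≤ Mb := hfb0 wb
  have hfaM : ∀ v ∈ S, fa v ≤ Ma := fun v hv => hwa hv
  have hfbM : ∀ v ∈ S, fb v ≤ Mb := fun v hv => hwb hv
  have hzam : ∀ v ∈ S, mz ≤ za v := fun v hv => hwz hv
  have h' : ∀ v ∈ S, za v + 2 * Real.sqrt (fa v * fb v) < 0 := fun v hv => h v hv
  -- degenerate case : fa vanishes on the sphere
  by_cases hAex : ∃ v ∈ S, 0 < fa v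
  swap
  · push_neg at hAex
    have hfa_eq : ∀ v ∈ S, fa v = 0 := fun v hv => le_antisymm (hAex v hv) (hfa0 v)
    obtain ⟨w, hwS, hw⟩ := hScpt.exists_isMaxOn hSne' hzacont.continuousOn
    have hzw : za w < 0 := by
      have := h' w hwS
      rw [hfa_eq w hwS, zero_mul, Real.sqrt_zero] at this
      linarith
    refine ⟨(Mb + 1) / (-za w), div_pos (by linarith) (by linarith), fun v hv => ?_⟩
    show za v + (Mb + 1) / (-za w) * fa v + ((Mb + 1) / (-za w))⁻¹ * fb v < 0
    have h1 : fa v = 0 := hfa_eq v hv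
    have h2 : za v ≤ za w := hw hv
    have h3 : fb v ≤ Mb := hfbM v hv
    have hinv : ((Mb + 1) / (-za w))⁻¹ = (-za w) / (Mb + 1) := by
      rw [inv_div]
    rw [h1, hinv, mul_zero, add_zero]
    have h5 : (-za w) / (Mb + 1) * fb v ≤ (-za w) / (Mb + 1) * Mb := by
      apply mul_le_mul_of_nonneg_left h3 (div_nonneg (by linarith) (by linarith))
    have h6 : (-za w) / (Mb + 1) * Mb < -za w := by
      rw [div_mul_eq_mul_div, div_lt_iff₀ (by linarith)]
      nlinarith
    linarith
  -- degenerate case : fb vanishes on the sphere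
  by_cases hBex : ∃ v ∈ S, 0 < fb v
  swap
  · push_neg at hBex
    have hfb_eq : ∀ v ∈ S, fb v = 0 := fun v hv => le_antisymm (hBex v hv) (hfb0 v)
    obtain ⟨w, hwS, hw⟩ := hScpt.exists_isMaxOn hSne' hzacont.continuousOn
    have hzw : za w < 0 := by
      have := h' w hwS
      rw [hfb_eq w hwS, mul_zero, Real.sqrt_zero] at this
      linarith
    refine ⟨(-za w) / (Ma + 1), div_pos (by linarith) (by linarith), fun v hv => ?_⟩
    show za v + (-za w) / (Ma + 1) * fa v + ((-za w) / (Ma + 1))⁻¹ * fb v < 0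
    have h1 : fb v = 0 := hfb_eq v hv
    have h2 : za v ≤ za w := hw hv
    have h3 : fa v ≤ Ma := hfaM v hv
    rw [h1, mul_zero, add_zero]
    have h5 : (-za w) / (Ma + 1) * fa v ≤ (-za w) / (Ma + 1) * Ma :=
      mul_le_mul_of_nonneg_left h3 (div_nonneg (by linarith) (by linarith))
    have h6 : (-za w) / (Ma + 1) * Ma < -za w := by
      rw [div_mul_eq_mul_div, div_lt_iff₀ (by linarith)]
      nlinarith
    linarith
  obtain ⟨va, hvaS, hva⟩ := hAex
  obtain ⟨vb, hvbS, hvb⟩ := hBex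
  -- the running objective and its maximizers
  set ψ : ℝ → (Fin n → ℝ) → ℝ := fun ε v => za v + ε * fa v + ε⁻¹ * fb v with hψ
  have hψcont : ∀ ε : ℝ, Continuous (ψ ε) := fun ε =>
    (hzacont.add (continuous_const.mul hfacont)).add (continuous_const.mul hfbcont)
  have hmaxat : ∀ ε : ℝ, ∃ v, v ∈ S ∧ ∀ w ∈ S, ψ ε w ≤ ψ ε v := by
    intro ε
    obtain ⟨v, hvS, hv⟩ := hScpt.exists_isMaxOn hSne' (hψcont ε).continuousOn
    exact ⟨v, hvS, fun w hw => hv hw⟩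
  choose V hVS hVmax using hmaxat
  set φ : ℝ → ℝ := fun ε => ψ ε (V ε) with hφ
  have hφle : ∀ ε : ℝ, ∀ v ∈ S, ψ ε v ≤ φ ε := fun ε v hv => hVmax ε v hv
  have hψdiff : ∀ (x y : ℝ) (v : Fin n → ℝ), x ≠ 0 → y ≠ 0 →
      ψ x v - ψ y v = (x - y) * (fa v - fb v / (x * y)) := by
    intro x y v hx hy
    show za v + x * fa v + x⁻¹ * fb v - (za v + y * fa v + y⁻¹ * fb v) = _
    field_simp
    ring
  -- coercivity bounds
  set D : ℝ := max (φ 1 + 1 - mz) 1 with hD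
  have hD1 : (1:ℝ) ≤ D := le_max_right _ _
  have hDpos : 0 < D := lt_of_lt_of_le one_pos hD1
  have hDge : φ 1 + 1 - mz ≤ D := le_max_left _ _
  set ε₂ : ℝ := max 1 (D / fa va) with hε₂def
  set ε₁ : ℝ := min 1 (fb vb / D) with hε₁def
  have hε₁pos : 0 < ε₁ := lt_min one_pos (div_pos hvb hDpos)
  have hε₁le1 : ε₁ ≤ 1 := min_le_left _ _
  have h1ε₂ : (1:ℝ) ≤ ε₂ := le_max_left _ _
  have hlow : ∀ ε : ℝ, 0 < ε → ε < ε₁ → φ 1 + 1 ≤ φ ε := by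
    intro ε hε hεlt
    have h1 : ψ ε vb ≤ φ ε := hφle ε vb hvbS
    have h2 : mz ≤ za vb := hzam vb hvbS
    have h3 : 0 ≤ ε * fa vb := mul_nonneg hε.le (hfa0 vb)
    have h4 : D ≤ ε⁻¹ * fb vb := by
      have hεle : ε ≤ fb vb / D := le_of_lt (lt_of_lt_of_le hεlt (min_le_right _ _))
      have h5 : ε * D ≤ fb vb := by
        have := mul_le_mul_of_nonneg_right hεle hDpos.le
        rwa [div_mul_cancel₀ _ hDpos.ne'] at this
      have h6 : ε⁻¹ * (ε * D) = D := by field_simp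
      calc D = ε⁻¹ * (ε * D) := h6.symm
        _ ≤ ε⁻¹ * fb vb := mul_le_mul_of_nonneg_left h5 (inv_pos.mpr hε).le
    have h7 : mz + D ≤ ψ ε vb := by
      show mz + D ≤ za vb + ε * fa vb + ε⁻¹ * fb vb
      linarith
    linarith
  have hhigh : ∀ ε : ℝ, ε₂ < ε → φ 1 + 1 ≤ φ ε := by
    intro ε hεgt
    have hε : 0 < ε := lt_of_lt_of_le one_pos (le_of_lt (lt_of_le_of_lt h1ε₂ hεgt))
    have h1 : ψ ε va ≤ φ ε := hφle ε va hvaS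
    have h2 : mz ≤ za va := hzam va hvaS
    have h3 : 0 ≤ ε⁻¹ * fb va := mul_nonneg (inv_pos.mpr hε).le (hfb0 va)
    have h4 : D ≤ ε * fa va := by
      have h5 : D / fa va ≤ ε := le_of_lt (lt_of_le_of_lt (le_max_right 1 (D / fa va)) hεgt)
      have := mul_le_mul_of_nonneg_right h5 hva.le
      rwa [div_mul_cancel₀ _ hva.ne'] at this
    have h7 : mz + D ≤ ψ ε va := by
      show mz + D ≤ za va + ε * fa va + ε⁻¹ * fb va
      linarith
    linarith
  -- Lipschitz continuity of φ on [ε₁, ε₂]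
  set C : ℝ := Ma + Mb / ε₁ ^ 2 + 1 with hC
  have hMbd : (0:ℝ) ≤ Mb / ε₁ ^ 2 := div_nonneg hMb0 (by positivity)
  have hCpos : 0 < C := by rw [hC]; linarith
  have hφdiffle : ∀ x ∈ Set.Icc ε₁ ε₂, ∀ y ∈ Set.Icc ε₁ ε₂, φ x - φ y ≤ C * |x - y| := by
    intro x hx y hy
    have hx0 : 0 < x := lt_of_lt_of_le hε₁pos hx.1
    have hy0 : 0 < y := lt_of_lt_of_le hε₁pos hy.1
    have h1 : ψ y (V x) ≤ φ y := hφle y (V x) (hVS x)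
    have h2 : φ x = ψ x (V x) := rfl
    have h3 : ψ x (V x) - ψ y (V x) = (x - y) * (fa (V x) - fb (V x) / (x * y)) :=
      hψdiff x y _ hx0.ne' hy0.ne'
    have h4 : fb (V x) / (x * y) ≤ Mb / ε₁ ^ 2 := by
      apply div_le_div₀ hMb0 (hfbM _ (hVS x)) (by positivity)
      nlinarith [hx.1, hy.1, hε₁pos]
    have h5 : 0 ≤ fb (V x) / (x * y) := div_nonneg (hfb0 _) (by positivity)
    have h6 : fa (V x) ≤ Ma := hfaM _ (hVS x)
    have h7 : 0 ≤ fa (V x) := hfa0 _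
    rcases le_or_gt y x with hxy | hxy
    · have habs : |x - y| = x - y := abs_of_nonneg (by linarith)
      rw [habs]
      have hq : fa (V x) - fb (V x) / (x * y) ≤ C := by rw [hC]; linarith
      calc φ x - φ y ≤ ψ x (V x) - ψ y (V x) := by linarith
        _ = (x - y) * (fa (V x) - fb (V x) / (x * y)) := h3
        _ ≤ (x - y) * C := mul_le_mul_of_nonneg_left hq (by linarith)
        _ = C * (x - y) := mul_comm _ _
    · have habs : |x - y| = -(x - y) := abs_of_neg (by linarith)
      rw [habs]
      have hq : -C ≤ fa (V x) - fb (V x) / (x * y) := by rw [hC]; linarith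
      have hxy' : x - y ≤ 0 := by linarith
      calc φ x - φ y ≤ ψ x (V x) - ψ y (V x) := by linarith
        _ = (x - y) * (fa (V x) - fb (V x) / (x * y)) := h3
        _ ≤ (x - y) * -C := mul_le_mul_of_nonpos_left hq hxy'
        _ = C * -(x - y) := by ring
  have hφcont : ContinuousOn φ (Set.Icc ε₁ ε₂) := by
    apply LipschitzOnWith.continuousOn (K := Real.toNNReal C)
    apply LipschitzOnWith.of_dist_le_mul
    intro x hx y hy
    rw [Real.dist_eq, Real.dist_eq, Real.coe_toNNReal C hCpos.le, abs_sub_le_iff]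
    refine ⟨hφdiffle x hx y hy, ?_⟩
    rw [abs_sub_comm]
    exact hφdiffle y hy x hx
  have h1I : (1:ℝ) ∈ Set.Icc ε₁ ε₂ := ⟨hε₁le1, h1ε₂⟩
  obtain ⟨εs, hεsI, hεsmin⟩ := (isCompact_Icc (a := ε₁) (b := ε₂)).exists_isMinOn
    ⟨1, h1I⟩ hφcont
  have hεspos : 0 < εs := lt_of_lt_of_le hε₁pos hεsI.1
  have hglobal : ∀ ε : ℝ, 0 < ε → φ εs ≤ φ ε := by
    intro ε hε
    rcases le_or_gt ε₁ ε with hεa | hεa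
    · rcases le_or_gt ε ε₂ with hεb | hεb
      · exact hεsmin (⟨hεa, hεb⟩ : ε ∈ Set.Icc ε₁ ε₂)
      · have ha := hhigh ε hεb
        have hb : φ εs ≤ φ 1 := hεsmin h1I
        linarith
    · have ha := hlow ε hε hεa
      have hb : φ εs ≤ φ 1 := hεsmin h1I
      linarith
  set lam : ℝ := φ εs with hlamdef
  by_cases hneg : lam < 0
  · refine ⟨εs, hεspos, fun v hv => ?_⟩
    show za v + εs * fa v + εs⁻¹ * fb v < 0
    exact lt_of_le_of_lt (hφle εs v hv) hneg
  exfalso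
  push_neg at hneg
  set g : (Fin n → ℝ) → ℝ := fun v => εs ^ 2 * fa v - fb v with hg
  have hgcont : Continuous g := (continuous_const.mul hfacont).sub hfbcont
  set L : ℝ := Ma + 4 * Mb / εs ^ 2 + 1 with hL
  have hMbd2 : (0:ℝ) ≤ 4 * Mb / εs ^ 2 := by positivity
  have hLpos : 0 < L := by rw [hL]; linarith
  -- Claim: some maximizer at εs has g ≥ 0
  have claimm : ∃ v ∈ S, ψ εs v = lam ∧ 0 ≤ g v := by
    by_contra hcon
    push_neg at hcon
    obtain ⟨δ, hδpos, hδ⟩ := gap hScpt hSne' (hψcont εs) hgcont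
      (fun v hv => hφle εs v hv) (fun v hv hvlam => lt_of_le_of_ne
        (le_of_lt (hcon v hv hvlam)) (ne_of_lt (hcon v hv hvlam)))
    set t : ℝ := min (δ / L) (δ / (εs * (Ma + 1))) with ht
    have htpos : 0 < t := lt_min (div_pos hδpos hLpos) (div_pos hδpos (by positivity))
    set ε : ℝ := εs + t with hεdef
    have hεpos : 0 < ε := by rw [hεdef]; linarith
    set v1 := V ε with hv1def
    have hv1S : v1 ∈ S := hVS ε
    have hid : ψ ε v1 - ψ εs v1 = t * (fa v1 - fb v1 / (ε * εs)) := by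
      have h0 := hψdiff ε εs v1 hεpos.ne' hεspos.ne'
      rw [h0, hεdef]
      ring_nf
    have hbd : fb v1 / (ε * εs) ≤ 4 * Mb / εs ^ 2 := by
      apply div_le_div₀ (by linarith) ?_ (by positivity) ?_
      · calc fb v1 ≤ Mb := hfbM v1 hv1S
          _ ≤ 4 * Mb := by linarith
      · rw [hεdef]
        nlinarith [mul_pos htpos hεspos]
    have hbd0 : 0 ≤ fb v1 / (ε * εs) := div_nonneg (hfb0 _) (by positivity)
    have hfam : fa v1 ≤ Ma := hfaM v1 hv1S
    have hfa0' : 0 ≤ fa v1 := hfa0 v1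
    have htL : t * L ≤ δ := by
      have h5 : t ≤ δ / L := min_le_left _ _
      have := mul_le_mul_of_nonneg_right h5 hLpos.le
      rwa [div_mul_cancel₀ _ hLpos.ne'] at this
    have hψlow : lam - δ ≤ ψ εs v1 := by
      have h1 : φ εs ≤ φ ε := hglobal ε hεpos
      have h2 : φ ε = ψ ε v1 := rfl
      have h3 : ψ ε v1 - ψ εs v1 ≤ t * L := by
        rw [hid]
        apply mul_le_mul_of_nonneg_left ?_ htpos.le
        rw [hL]
        linarith
      linarith
    have hgneg : g v1 ≤ -δ := hδ v1 hv1S hψlow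
    have hgneg' : εs ^ 2 * fa v1 - fb v1 ≤ -δ := hgneg
    have ht3 : t * (εs * (Ma + 1)) ≤ δ := by
      have h5 : t ≤ δ / (εs * (Ma + 1)) := min_le_right _ _
      have := mul_le_mul_of_nonneg_right h5 (by positivity : (0:ℝ) ≤ εs * (Ma + 1))
      rwa [div_mul_cancel₀ _ (by positivity : (εs * (Ma + 1)) ≠ 0)] at this
    have hmain : fa v1 - fb v1 / (ε * εs) < 0 := by
      rw [sub_neg, lt_div_iff₀ (by positivity : (0:ℝ) < ε * εs)]
      rw [hεdef]
      nlinarith [mul_le_mul_of_nonneg_right hfam (mul_nonneg htpos.le hεspos.le),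
        mul_pos htpos hεspos]
    have hcontr : φ ε < lam := by
      have h2 : φ ε = ψ ε v1 := rfl
      have h9 : ψ εs v1 ≤ lam := hφle εs v1 hv1S
      have h10 : t * (fa v1 - fb v1 / (ε * εs)) < 0 := mul_neg_of_pos_of_neg htpos hmain
      clear_value v1 ε t lam φ ψ za fa fb
      have h11 : ψ ε v1 = ψ εs v1 + t * (fa v1 - fb v1 / (ε * εs)) := by linarith [hid]
      rw [h2, h11]
      linarith
    have := hglobal ε hεpos
    linarith
  -- Claim: some maximizer at εs has g ≤ 0
  have claimp : ∃ v ∈ S, ψ εs v = lam ∧ g v ≤ 0 := by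
    by_contra hcon
    push_neg at hcon
    obtain ⟨δ, hδpos, hδ⟩ := gap hScpt hSne' (hψcont εs) hgcont.neg
      (fun v hv => hφle εs v hv) (fun v hv hvlam => neg_lt_zero.mpr (hcon v hv hvlam))
    set t : ℝ := min (min (δ / L) (δ / (εs * (Ma + 1)))) (εs / 2) with ht
    have htpos : 0 < t := lt_min (lt_min (div_pos hδpos hLpos)
      (div_pos hδpos (by positivity))) (by linarith)
    have htεs : t ≤ εs / 2 := min_le_right _ _
    set ε : ℝ := εs - t with hεdef
    have hεpos : 0 < ε := by rw [hεdef]; linarith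
    have hεεs : εs / 2 ≤ ε := by rw [hεdef]; linarith
    set v1 := V ε with hv1def
    have hv1S : v1 ∈ S := hVS ε
    have hid : ψ ε v1 - ψ εs v1 = -t * (fa v1 - fb v1 / (ε * εs)) := by
      have h0 := hψdiff ε εs v1 hεpos.ne' hεspos.ne'
      rw [h0, hεdef]
      ring_nf
    have hbd : fb v1 / (ε * εs) ≤ 4 * Mb / εs ^ 2 := by
      have h1 : fb v1 / (ε * εs) ≤ (2 * Mb) / (εs ^ 2 / 2) := by
        apply div_le_div₀ (by linarith) (by linarith [hfbM v1 hv1S]) (by positivity) ?_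
        rw [hεdef]
        nlinarith [mul_pos htpos hεspos, sq_nonneg εs]
      have h2 : (2 * Mb) / (εs ^ 2 / 2) = 4 * Mb / εs ^ 2 := by
        field_simp
        ring
      rw [h2] at h1
      exact h1
    have hbd0 : 0 ≤ fb v1 / (ε * εs) := div_nonneg (hfb0 _) (by positivity)
    have hfam : fa v1 ≤ Ma := hfaM v1 hv1S
    have hfa0' : 0 ≤ fa v1 := hfa0 v1
    have htL : t * L ≤ δ := by
      have h5 : t ≤ δ / L := le_trans (min_le_left _ _) (min_le_left _ _)
      have := mul_le_mul_of_nonneg_right h5 hLpos.le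
      rwa [div_mul_cancel₀ _ hLpos.ne'] at this
    have hψlow : lam - δ ≤ ψ εs v1 := by
      have h1 : φ εs ≤ φ ε := hglobal ε hεpos
      have h2 : φ ε = ψ ε v1 := rfl
      have h3 : ψ ε v1 - ψ εs v1 ≤ t * L := by
        rw [hid]
        have hkey : -(fa v1 - fb v1 / (ε * εs)) ≤ L := by
          rw [hL]
          linarith
        nlinarith [mul_le_mul_of_nonneg_left hkey htpos.le]
      linarith
    have hgpos : δ ≤ g v1 := by
      have := hδ v1 hv1S hψlow
      simp only [Pi.neg_apply] at this
      linarith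
    have hgpos' : δ ≤ εs ^ 2 * fa v1 - fb v1 := hgpos
    have ht3 : t * (εs * (Ma + 1)) ≤ δ := by
      have h5 : t ≤ δ / (εs * (Ma + 1)) := le_trans (min_le_left _ _) (min_le_right _ _)
      have := mul_le_mul_of_nonneg_right h5 (by positivity : (0:ℝ) ≤ εs * (Ma + 1))
      rwa [div_mul_cancel₀ _ (by positivity : (εs * (Ma + 1)) ≠ 0)] at this
    have hmain : 0 < fa v1 - fb v1 / (ε * εs) := by
      rw [sub_pos, div_lt_iff₀ (by positivity : (0:ℝ) < ε * εs)]
      rw [hεdef]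
      nlinarith [mul_le_mul_of_nonneg_right hfam (mul_nonneg htpos.le hεspos.le),
        mul_pos htpos hεspos]
    have hcontr : φ ε < lam := by
      have h2 : φ ε = ψ ε v1 := rfl
      have h9 : ψ εs v1 ≤ lam := hφle εs v1 hv1S
      have h10 : 0 < t * (fa v1 - fb v1 / (ε * εs)) := mul_pos htpos hmain
      clear_value v1 ε t lam φ ψ za fa fb
      linarith [hid]
    have := hglobal ε hεpos
    linarith
  obtain ⟨vm, hvmS, hvmlam, hvmg⟩ := claimm
  obtain ⟨vp, hvpS, hvplam, hvpg⟩ := claimp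
  set Mst : Matrix (Fin n) (Fin n) ℝ := Z + εs • A + εs⁻¹ • B with hMst
  have hMsth : Mst.IsHermitian := by
    rw [hMst, Matrix.IsHermitian, conjTranspose_add, conjTranspose_add,
      conjTranspose_smul, conjTranspose_smul, hZ.eq, hA.1.eq, hB.1.eq,
      star_trivial, star_trivial]
  have hψeq : ∀ v : Fin n → ℝ, v ⬝ᵥ Mst *ᵥ v = ψ εs v := by
    intro v
    show v ⬝ᵥ (Z + εs • A + εs⁻¹ • B) *ᵥ v = za v + εs * fa v + εs⁻¹ * fb v
    rw [add_mulVec, add_mulVec, dotProduct_add, dotProduct_add, smul_mulVec,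
      smul_mulVec, dotProduct_smul, dotProduct_smul, smul_eq_mul, smul_eq_mul]
  have hbound : ∀ v : Fin n → ℝ, v ⬝ᵥ Mst *ᵥ v ≤ lam * (v ⬝ᵥ v) :=
    quad_bound_of_sphere Mst (fun v hv => by rw [hψeq]; exact hφle εs v hv)
  have heigm : Mst *ᵥ vm = lam • vm := eig Mst hMsth hvmS hbound (by rw [hψeq]; exact hvmlam)
  have heigp : Mst *ᵥ vp = lam • vp := eig Mst hMsth hvpS hbound (by rw [hψeq]; exact hvplam)
  set Gm : Matrix (Fin n) (Fin n) ℝ := εs ^ 2 • A - B with hGm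
  have hgeq : ∀ v : Fin n → ℝ, v ⬝ᵥ Gm *ᵥ v = g v := by
    intro v
    show v ⬝ᵥ (εs ^ 2 • A - B) *ᵥ v = εs ^ 2 * fa v - fb v
    rw [sub_mulVec, dotProduct_sub, smul_mulVec, dotProduct_smul, smul_eq_mul]
  obtain ⟨w, hwunit, hweig, hwg⟩ := ivt_eigensphere Mst Gm hvmS hvpS heigm heigp
    (by rw [hgeq]; exact hvmg) (by rw [hgeq]; exact hvpg)
  have hψw : ψ εs w = lam := by
    rw [← hψeq, hweig, dotProduct_smul, smul_eq_mul, hwunit, mul_one]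
  have hgw : εs ^ 2 * fa w = fb w := by
    have h0 := hwg
    rw [hgeq] at h0
    have h1 : εs ^ 2 * fa w - fb w = 0 := h0
    linarith
  have hsqrt : Real.sqrt (fa w * fb w) = εs * fa w := by
    rw [← hgw]
    have h0 : fa w * (εs ^ 2 * fa w) = (εs * fa w) ^ 2 := by ring
    rw [h0, Real.sqrt_sq (mul_nonneg hεspos.le (hfa0 w))]
  have hhw := h' w hwunit
  rw [hsqrt] at hhw
  have hfinal : ψ εs w = za w + 2 * (εs * fa w) := by
    show za w + εs * fa w + εs⁻¹ * fb w = _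
    rw [← hgw]
    field_simp
    ring
  rw [hψw] at hfinal
  linarith

lemma vecMulVec_mulVec' {m k : ℕ} (a : Fin m → ℝ) (b : Fin k → ℝ) (x : Fin k → ℝ) :
    (vecMulVec a b) *ᵥ x = (b ⬝ᵥ x) • a := by
  ext i
  simp only [mulVec, dotProduct, vecMulVec_apply, Pi.smul_apply, smul_eq_mul]
  rw [Finset.sum_mul]
  apply Finset.sum_congr rfl
  intros
  ring

lemma cs_sq {m : ℕ} (a b : Fin m → ℝ) : (a ⬝ᵥ b) ^ 2 ≤ (a ⬝ᵥ a) * (b ⬝ᵥ b) := by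
  have h := Finset.sum_mul_sq_le_sq_mul_sq Finset.univ a b
  simpa [dotProduct, pow_two, Finset.sum_mul_sum] using
    (by simpa [pow_two] using h : (∑ i, a i * b i) ^ 2 ≤ (∑ i, a i * a i) * ∑ i, b i * b i)

lemma quad_XXt {n p : ℕ} (X : Matrix (Fin n) (Fin p) ℝ) (v : Fin n → ℝ) :
    v ⬝ᵥ (X * Xᵀ) *ᵥ v = (v ᵥ* X) ⬝ᵥ (v ᵥ* X) := by
  rw [← mulVec_mulVec, dotProduct_mulVec, mulVec_transpose]

lemma quad_YtY {n q : ℕ} (Y : Matrix (Fin q) (Fin n) ℝ) (v : Fin n → ℝ) :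
    v ⬝ᵥ (Yᵀ * Y) *ᵥ v = (Y *ᵥ v) ⬝ᵥ (Y *ᵥ v) := by
  rw [← mulVec_mulVec, dotProduct_mulVec, vecMul_transpose]

lemma quad_XDY {n p q : ℕ} (X : Matrix (Fin n) (Fin p) ℝ) (Δ : Matrix (Fin p) (Fin q) ℝ)
    (Y : Matrix (Fin q) (Fin n) ℝ) (v : Fin n → ℝ) :
    v ⬝ᵥ (X * Δ * Y) *ᵥ v = (v ᵥ* X) ⬝ᵥ (Δ *ᵥ (Y *ᵥ v)) := by
  rw [← mulVec_mulVec, ← mulVec_mulVec, dotProduct_mulVec]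

lemma quad_transpose {m : ℕ} (M : Matrix (Fin m) (Fin m) ℝ) (v : Fin m → ℝ) :
    v ⬝ᵥ Mᵀ *ᵥ v = v ⬝ᵥ M *ᵥ v := by
  rw [mulVec_transpose, dotProduct_comm, ← dotProduct_mulVec]

lemma YtDtXt_eq {n p q : ℕ} (X : Matrix (Fin n) (Fin p) ℝ) (Δ : Matrix (Fin p) (Fin q) ℝ)
    (Y : Matrix (Fin q) (Fin n) ℝ) : Yᵀ * Δᵀ * Xᵀ = (X * Δ * Y)ᵀ := by
  rw [transpose_mul, transpose_mul, Matrix.mul_assoc]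

lemma onesub_psd {p q : ℕ} (Δ : Matrix (Fin p) (Fin q) ℝ)
    (h : ∀ x : Fin q → ℝ, (Δ *ᵥ x) ⬝ᵥ (Δ *ᵥ x) ≤ x ⬝ᵥ x) :
    ((1 : Matrix (Fin q) (Fin q) ℝ) - Δᵀ * Δ).PosSemidef := by
  refine Matrix.PosSemidef.of_dotProduct_mulVec_nonneg ?_ ?_
  · exact isHermitian_one.sub (by
      have h0 := isHermitian_conjTranspose_mul_self Δ
      rwa [conjTranspose_eq_transpose_of_trivial] at h0)
  · intro x
    rw [star_trivial, sub_mulVec, dotProduct_sub, one_mulVec, ← mulVec_mulVec,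
      dotProduct_mulVec, vecMul_transpose]
    linarith [h x]

lemma deltaBound {p q : ℕ} {Δ : Matrix (Fin p) (Fin q) ℝ}
    (hΔ : ((1 : Matrix (Fin q) (Fin q) ℝ) - Δᵀ * Δ).PosSemidef) (x : Fin q → ℝ) :
    (Δ *ᵥ x) ⬝ᵥ (Δ *ᵥ x) ≤ x ⬝ᵥ x := by
  have h := hΔ.dotProduct_mulVec_nonneg x
  rw [star_trivial, sub_mulVec, dotProduct_sub, one_mulVec, ← mulVec_mulVec,
    dotProduct_mulVec, vecMul_transpose] at h
  linarith

lemma expand_form0 {n : ℕ} (Z A B : Matrix (Fin n) (Fin n) ℝ) (ε η : ℝ) (v : Fin n → ℝ) :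
    v ⬝ᵥ (Z + ε • A + η • B) *ᵥ v =
      v ⬝ᵥ Z *ᵥ v + ε * (v ⬝ᵥ A *ᵥ v) + η * (v ⬝ᵥ B *ᵥ v) := by
  rw [add_mulVec, add_mulVec, dotProduct_add, dotProduct_add, smul_mulVec,
    smul_mulVec, dotProduct_smul, dotProduct_smul, smul_eq_mul, smul_eq_mul]

lemma expand_form {n p q : ℕ} (Z : Matrix (Fin n) (Fin n) ℝ) (X : Matrix (Fin n) (Fin p) ℝ)
    (Y : Matrix (Fin q) (Fin n) ℝ) (ε : ℝ) (v : Fin n → ℝ) :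
    v ⬝ᵥ (Z + ε • (X * Xᵀ) + (1 / ε) • (Yᵀ * Y)) *ᵥ v =
      v ⬝ᵥ Z *ᵥ v + ε * ((v ᵥ* X) ⬝ᵥ (v ᵥ* X)) + (1 / ε) * ((Y *ᵥ v) ⬝ᵥ (Y *ᵥ v)) := by
  rw [add_mulVec, add_mulVec, dotProduct_add, dotProduct_add, smul_mulVec,
    smul_mulVec, dotProduct_smul, dotProduct_smul, smul_eq_mul, smul_eq_mul,
    quad_XXt, quad_YtY]

/-- Petersen's Lemma: For a symmetric `Z ∈ ℝ^{n×n}` and matrices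
`X ∈ ℝ^{n×p}`, `Y ∈ ℝ^{q×n}`, the matrix `Z + X Δ Y + Yᵀ Δᵀ Xᵀ` is negative definite for
every `Δ` with `Δᵀ Δ ⪯ I_q` if and only if there exists `ε > 0` such that
`Z + ε X Xᵀ + (1/ε) Yᵀ Y` is negative definite. -/
theorem petersen_lemma
    {n p q : ℕ} (Z : Matrix (Fin n) (Fin n) ℝ) (hZ : Z.IsSymm)
    (X : Matrix (Fin n) (Fin p) ℝ) (Y : Matrix (Fin q) (Fin n) ℝ) :
    (∀ Δ : Matrix (Fin p) (Fin q) ℝ,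
        ((1 : Matrix (Fin q) (Fin q) ℝ) - Δᵀ * Δ).PosSemidef →
          (-(Z + X * Δ * Y + Yᵀ * Δᵀ * Xᵀ)).PosDef) ↔
      ∃ ε : ℝ, 0 < ε ∧ (-(Z + ε • (X * Xᵀ) + (1 / ε) • (Yᵀ * Y))).PosDef := by
  have hZh : Z.IsHermitian := by
    rw [Matrix.IsHermitian, conjTranspose_eq_transpose_of_trivial]
    exact hZ
  constructor
  · intro hΔall
    -- derive the scalar condition on the sphere
    have hscal : ∀ v : Fin n → ℝ, v ⬝ᵥ v = 1 →
        v ⬝ᵥ Z *ᵥ v + 2 * Real.sqrt ((v ⬝ᵥ (X * Xᵀ) *ᵥ v) * (v ⬝ᵥ (Yᵀ * Y) *ᵥ v)) < 0 := by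
      intro v hv
      have hv0 : v ≠ 0 := by
        intro h0
        rw [h0] at hv
        simp at hv
      set a : Fin p → ℝ := v ᵥ* X with ha
      set b : Fin q → ℝ := Y *ᵥ v with hb
      rw [quad_XXt, quad_YtY, ← ha, ← hb]
      have ha0 : 0 ≤ a ⬝ᵥ a := dp_nonneg a
      have hb0 : 0 ≤ b ⬝ᵥ b := dp_nonneg b
      rcases eq_or_lt_of_le ha0 with haz | hapos
      · -- a ⬝ᵥ a = 0 : use Δ = 0
        have h1 : Real.sqrt ((a ⬝ᵥ a) * (b ⬝ᵥ b)) = 0 := by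
          rw [← haz, zero_mul, Real.sqrt_zero]
        rw [h1, mul_zero, add_zero]
        have hPD := hΔall 0 (by simpa using (Matrix.PosSemidef.one :
          ((1 : Matrix (Fin q) (Fin q) ℝ)).PosSemidef))
        have h2 := hPD.dotProduct_mulVec_pos hv0
        rw [star_trivial] at h2
        simp only [Matrix.mul_zero, Matrix.zero_mul, transpose_zero, add_zero] at h2
        rw [neg_mulVec, dotProduct_neg] at h2
        linarith
      rcases eq_or_lt_of_le hb0 with hbz | hbpos
      · -- b ⬝ᵥ b = 0 : use Δ = 0
        have h1 : Real.sqrt ((a ⬝ᵥ a) * (b ⬝ᵥ b)) = 0 := by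
          rw [← hbz, mul_zero, Real.sqrt_zero]
        rw [h1, mul_zero, add_zero]
        have hPD := hΔall 0 (by simpa using (Matrix.PosSemidef.one :
          ((1 : Matrix (Fin q) (Fin q) ℝ)).PosSemidef))
        have h2 := hPD.dotProduct_mulVec_pos hv0
        rw [star_trivial] at h2
        simp only [Matrix.mul_zero, Matrix.zero_mul, transpose_zero, add_zero] at h2
        rw [neg_mulVec, dotProduct_neg] at h2
        linarith
      -- main case : both positive, use the rank-one Δ
      set s : ℝ := Real.sqrt (a ⬝ᵥ a) with hs
      set t : ℝ := Real.sqrt (b ⬝ᵥ b) with hts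
      have hspos : 0 < s := Real.sqrt_pos.mpr hapos
      have htpos : 0 < t := Real.sqrt_pos.mpr hbpos
      have hs2 : s ^ 2 = a ⬝ᵥ a := Real.sq_sqrt ha0
      have ht2 : t ^ 2 = b ⬝ᵥ b := Real.sq_sqrt hb0
      set Δ : Matrix (Fin p) (Fin q) ℝ := (s * t)⁻¹ • vecMulVec a b with hΔdef
      have hmulvec : ∀ x : Fin q → ℝ, Δ *ᵥ x = ((s * t)⁻¹ * (b ⬝ᵥ x)) • a := by
        intro x
        rw [hΔdef, smul_mulVec, vecMulVec_mulVec', smul_smul]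
      have hnorm : ∀ x : Fin q → ℝ, (Δ *ᵥ x) ⬝ᵥ (Δ *ᵥ x) ≤ x ⬝ᵥ x := by
        intro x
        rw [hmulvec x, smul_dotProduct, dotProduct_smul, smul_eq_mul, smul_eq_mul]
        have hcs := cs_sq b x
        have hst2 : (s * t) ^ 2 = (a ⬝ᵥ a) * (b ⬝ᵥ b) := by
          rw [mul_pow, hs2, ht2]
        have key : (s * t)⁻¹ * (b ⬝ᵥ x) * ((s * t)⁻¹ * (b ⬝ᵥ x) * (a ⬝ᵥ a)) =
            (b ⬝ᵥ x) ^ 2 / (b ⬝ᵥ b) := by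
          have hstne : (s * t) ≠ 0 := by positivity
          field_simp
          nlinarith [hst2]
        rw [key]
        rw [div_le_iff₀ hbpos]
        nlinarith [hcs, dp_nonneg x]
      have hPD := hΔall Δ (onesub_psd Δ hnorm)
      have h2 := hPD.dotProduct_mulVec_pos hv0
      rw [star_trivial, neg_mulVec, dotProduct_neg] at h2
      have h3 : v ⬝ᵥ (Z + X * Δ * Y + Yᵀ * Δᵀ * Xᵀ) *ᵥ v =
          v ⬝ᵥ Z *ᵥ v + 2 * (s * t) := by
        rw [add_mulVec, add_mulVec, dotProduct_add, dotProduct_add, YtDtXt_eq,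
          quad_transpose, quad_XDY, ← ha, ← hb, hmulvec b]
        have h4 : a ⬝ᵥ (((s * t)⁻¹ * (b ⬝ᵥ b)) • a) = (s * t)⁻¹ * (b ⬝ᵥ b) * (a ⬝ᵥ a) := by
          rw [dotProduct_smul, smul_eq_mul]
        rw [h4]
        have hstne : (s * t) ≠ 0 := by positivity
        have h5 : (s * t)⁻¹ * (b ⬝ᵥ b) * (a ⬝ᵥ a) = s * t := by
          field_simp
          nlinarith [hs2, ht2]
        rw [h5]
        ring
      rw [h3] at h2
      have h6 : Real.sqrt ((a ⬝ᵥ a) * (b ⬝ᵥ b)) = s * t := by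
        rw [← hs2, ← ht2, ← mul_pow, Real.sqrt_sq (by positivity)]
      rw [h6]
      linarith
    -- apply the key lemma
    have hXpsd : (X * Xᵀ).PosSemidef := by
      have h0 := Matrix.posSemidef_self_mul_conjTranspose X
      rwa [conjTranspose_eq_transpose_of_trivial] at h0
    have hYpsd : (Yᵀ * Y).PosSemidef := by
      have h0 := Matrix.posSemidef_conjTranspose_mul_self Y
      rwa [conjTranspose_eq_transpose_of_trivial] at h0
    obtain ⟨ε, hεpos, hεs⟩ := key Z (X * Xᵀ) (Yᵀ * Y) hZh hXpsd hYpsd hscal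
    refine ⟨ε, hεpos, Matrix.PosDef.of_dotProduct_mulVec_pos ?_ ?_⟩
    · show (-(Z + ε • (X * Xᵀ) + (1 / ε) • (Yᵀ * Y)))ᴴ = _
      rw [conjTranspose_neg, conjTranspose_add, conjTranspose_add, conjTranspose_smul,
        conjTranspose_smul, hZh.eq, star_trivial, star_trivial, hXpsd.1.eq, hYpsd.1.eq]
    · intro x hx
      rw [star_trivial, neg_mulVec, dotProduct_neg, neg_pos]
      obtain ⟨c, u, hc, hu, rfl⟩ := exists_unit hx
      rw [quad_smul]
      apply mul_neg_of_pos_of_neg (by positivity)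
      rw [expand_form0, one_div]
      exact hεs u hu
  · rintro ⟨ε, hεpos, hPD⟩ Δ hΔpsd
    refine Matrix.PosDef.of_dotProduct_mulVec_pos ?_ ?_
    · show (-(Z + X * Δ * Y + Yᵀ * Δᵀ * Xᵀ))ᴴ = _
      rw [conjTranspose_eq_transpose_of_trivial, transpose_neg, transpose_add, transpose_add,
        YtDtXt_eq, transpose_transpose, hZ.eq, ← YtDtXt_eq, add_right_comm]
    · intro x hx
      rw [star_trivial]
      have h2 := hPD.dotProduct_mulVec_pos hx
      rw [star_trivial, neg_mulVec, dotProduct_neg, expand_form0, one_div,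
        quad_XXt, quad_YtY] at h2
      rw [neg_mulVec, dotProduct_neg, neg_pos]
      rw [add_mulVec, add_mulVec, dotProduct_add, dotProduct_add, YtDtXt_eq,
        quad_transpose, quad_XDY]
      set a : Fin p → ℝ := x ᵥ* X with ha
      set b : Fin q → ℝ := Y *ᵥ x with hb
      set w : Fin p → ℝ := Δ *ᵥ b with hw
      have h4 : a ⬝ᵥ w ≤ Real.sqrt (a ⬝ᵥ a) * Real.sqrt (w ⬝ᵥ w) := cs a w
      have h5 : Real.sqrt (w ⬝ᵥ w) ≤ Real.sqrt (b ⬝ᵥ b) :=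
        Real.sqrt_le_sqrt (deltaBound hΔpsd b)
      have h6 : Real.sqrt (a ⬝ᵥ a) * Real.sqrt (w ⬝ᵥ w) ≤
          Real.sqrt (a ⬝ᵥ a) * Real.sqrt (b ⬝ᵥ b) :=
        mul_le_mul_of_nonneg_left h5 (Real.sqrt_nonneg _)
      have h7 : 2 * Real.sqrt ((a ⬝ᵥ a) * (b ⬝ᵥ b)) ≤
          ε * (a ⬝ᵥ a) + ε⁻¹ * (b ⬝ᵥ b) := amgm (dp_nonneg a) (dp_nonneg b) hεpos
      rw [Real.sqrt_mul (dp_nonneg a)] at h7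
      linarith
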